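/- Let m, n > 1 be coprime squarefree integers, b of multiplicative order n mod m, (G,+) = Z_m × Z_n (componentwise), (G,·) the semidirect product (r,s)·(r',s') = (r + b^s r', s + s'). Then every subgroup of (G,+) is ·-stable: for every subgroup G' of (G,+), every (x,y) ∈ G', and every g ∈ G, the element (g · (x,0) · g^{-1}) + (0,y) lies in G' (here g^{-1} is the inverse in (G,·)). Specifically, for g = (a,-h), one has g^{-1}·(x,0)·g + (0,y) = (b^h x, y). -/

import Mathlib

/-- The semidirect-product operation `(r,s)·(r',s') = (r + b^s r', s + s')` on
`Z_m × Z_n`. -/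
def mulSD {m n : ℕ} (b : (ZMod m)ˣ) (x y : ZMod m × ZMod n) : ZMod m × ZMod n :=
  (x.1 + (b : ZMod m) ^ x.2.val * y.1, x.2 + y.2)

/-- With `m, n > 1` coprime squarefree, `b` of order `n` mod `m`, `(G,+)`
componentwise and `(G,·)` the semidirect product, every subgroup of `(G,+)` is ·-stable:
for every subgroup `S` of `(G,+)`, `(x,y) ∈ S`, and `g = (a,-h) ∈ G` (whose ·-inverse is
`(-b^h a, h)`), one has `g⁻¹·(x,0)·g + (0,y) = (b^h x, y)`, and this element lies in `S`. -/
theorem stmt16 (m n : ℕ) (hm : 1 < m) (hn : 1 < n)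
    (hsfm : Squarefree m) (hsfn : Squarefree n)
    (hcop : Nat.Coprime m n) (hdiv : n ∣ Nat.totient m)
    (b : (ZMod m)ˣ) (hb : orderOf b = n)
    (S : AddSubgroup (ZMod m × ZMod n)) :
    ∀ x : ZMod m, ∀ y : ZMod n, (x, y) ∈ S → ∀ a : ZMod m, ∀ h : ZMod n,
      mulSD b (mulSD b (-((b : ZMod m) ^ h.val * a), h) (x, 0)) (a, -h) + (0, y) =
          ((b : ZMod m) ^ h.val * x, y) ∧
      mulSD b (mulSD b (-((b : ZMod m) ^ h.val * a), h) (x, 0)) (a, -h) + (0, y) ∈ S := by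
  haveI : NeZero m := ⟨by omega⟩
  intro x y hxy a h
  have key : mulSD b (mulSD b (-((b : ZMod m) ^ h.val * a), h) (x, 0)) (a, -h) + (0, y) =
      ((b : ZMod m) ^ h.val * x, y) := by
    simp only [mulSD, Prod.mk_add_mk, Prod.mk.injEq, add_zero, add_neg_cancel, zero_add]
    exact ⟨by ring, trivial⟩
  refine ⟨key, ?_⟩
  rw [key]
  set c := ((b : ZMod m) ^ h.val).val with hc
  obtain ⟨k, hk1, hk2⟩ := Nat.chineseRemainder hcop c 1
  have hkm : (k : ZMod m) = (b : ZMod m) ^ h.val := by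
    have := (ZMod.natCast_eq_natCast_iff _ _ _).mpr hk1
    rwa [ZMod.natCast_val, ZMod.cast_id] at this
  have hkn : (k : ZMod n) = 1 := by
    have := (ZMod.natCast_eq_natCast_iff _ _ _).mpr hk2
    simpa using this
  have : ((b : ZMod m) ^ h.val * x, y) = k • ((x, y) : ZMod m × ZMod n) := by
    rw [Prod.smul_mk, nsmul_eq_mul, nsmul_eq_mul, hkm, hkn, one_mul]
  rw [this]
  exact AddSubgroup.nsmul_mem S hxy k
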